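/- Let 𝒯 be a laminar family of subsets of a finite set N containing all singletons. Then the set of vectors {±𝟙_T : T ∈ 𝒯} ⊆ ℤ^N is unimodular: for every subset B of these vectors, the subgroup of ℤ^N generated by B is pure. -/

import Mathlib

open Set

private noncomputable def ind {N : Type*} (T : Set N) : N → ℤ :=
  T.indicator fun _ => 1

private lemma ind_diff {N : Type*} {T₀ T : Set N} (h : T₀ ⊆ T) :
    ind (T \ T₀) = ind T - ind T₀ := by
  funext j
  by_cases h0 : j ∈ T₀
  · have : j ∈ T := h h0
    simp [ind, Set.indicator_apply, h0, this]
  · by_cases h1 : j ∈ T <;> simp [ind, Set.indicator_apply, h0, h1]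

private lemma ind_empty {N : Type*} : ind (∅ : Set N) = 0 := by
  funext j; simp [ind]

private lemma diff_self_of_inter_empty {N : Type*} {T T₀ : Set N} (h : T ∩ T₀ = ∅) :
    T \ T₀ = T :=
  sdiff_eq_self_iff_disjoint.mpr (Set.disjoint_iff_inter_eq_empty.mpr h).symm

/-- The key purity lemma: for a laminar family `S`, the subgroup generated by the
indicator vectors of members of `S` is pure. -/
private lemma laminar_pure {N : Type*} [Fintype N] :
    ∀ (n : ℕ) (S : Set (Set N)), S.ncard ≤ n →
    (∀ A ∈ S, ∀ B ∈ S, A ⊆ B ∨ B ⊆ A ∨ A ∩ B = ∅) →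
    ∀ (k : ℤ), k ≠ 0 → ∀ x : N → ℤ,
      k • x ∈ AddSubgroup.closure (ind '' S) → x ∈ AddSubgroup.closure (ind '' S) := by
  intro n
  induction n with
  | zero =>
    intro S hcard _ k hk x hx
    have hS : S = ∅ := by
      have := Set.ncard_eq_zero (S.toFinite) |>.mp (Nat.le_zero.mp hcard)
      exact this
    subst hS
    simp only [Set.image_empty, AddSubgroup.closure_empty, AddSubgroup.mem_bot] at hx ⊢
    have : x = 0 := by
      have := smul_eq_zero.mp hx
      tauto
    exact this
  | succ n IH =>
    intro S hcard hlam k hk x hx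
    by_cases hF : {T | T ∈ S ∧ T.Nonempty}.Nonempty
    · -- choose a minimal nonempty member T₀
      obtain ⟨T₀, hT₀F, hmin⟩ :=
        (show ∃ T₀ ∈ {T | T ∈ S ∧ T.Nonempty}, ∀ T ∈ {T | T ∈ S ∧ T.Nonempty},
            T.ncard ≤ T₀.ncard → T₀.ncard = T.ncard from by
          obtain ⟨a, ha, h⟩ := (Set.toFinite {T | T ∈ S ∧ T.Nonempty}).exists_minimalFor
            Set.ncard _ hF
          exact ⟨a, ha, fun b hb hle => le_antisymm (h hb hle) hle⟩)
      obtain ⟨hT₀S, hT₀ne⟩ := hT₀F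
      obtain ⟨i, hi⟩ := hT₀ne
      -- key structural facts
      have h1 : ∀ T ∈ S, i ∈ T → T₀ ⊆ T := by
        intro T hT hiT
        rcases hlam T hT T₀ hT₀S with h | h | h
        · have hTF : T ∈ {T | T ∈ S ∧ T.Nonempty} := ⟨hT, ⟨i, hiT⟩⟩
          have hle : T.ncard ≤ T₀.ncard := Set.ncard_le_ncard h (Set.toFinite _)
          have heq : T₀.ncard = T.ncard := hmin T hTF hle
          have : T = T₀ := Set.eq_of_subset_of_ncard_le h heq.le (Set.toFinite _)
          rw [this]
        · exact h
        · exfalso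
          have hmem : i ∈ T ∩ T₀ := ⟨hiT, hi⟩
          rw [h] at hmem
          exact hmem
      have h2 : ∀ T ∈ S, i ∉ T → T ∩ T₀ = ∅ := by
        intro T hT hiT
        rcases hlam T hT T₀ hT₀S with h | h | h
        · rcases T.eq_empty_or_nonempty with he | hne
          · rw [he]; simp
          · have hTF : T ∈ {T | T ∈ S ∧ T.Nonempty} := ⟨hT, hne⟩
            have hle : T.ncard ≤ T₀.ncard := Set.ncard_le_ncard h (Set.toFinite _)
            have heq : T₀.ncard = T.ncard := hmin T hTF hle
            have : T = T₀ := Set.eq_of_subset_of_ncard_le h heq.le (Set.toFinite _)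
            exact absurd (this ▸ hi) hiT
        · exact absurd (h hi) hiT
        · exact h
      -- the elimination homomorphism
      set φ : (N → ℤ) →+ (N → ℤ) :=
        AddMonoidHom.mk' (fun z => z - z i • ind T₀) (by
          intro a b
          funext j
          simp [add_smul]
          ring) with hφ
      -- the smaller laminar family
      set S' : Set (Set N) := (fun T => T \ T₀) '' (S \ {T₀}) with hS'
      have hlam' : ∀ A ∈ S', ∀ B ∈ S', A ⊆ B ∨ B ⊆ A ∨ A ∩ B = ∅ := by
        rintro _ ⟨A, hA, rfl⟩ _ ⟨B, hB, rfl⟩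
        rcases hlam A hA.1 B hB.1 with h | h | h
        · exact Or.inl (Set.diff_subset_diff_left h)
        · exact Or.inr (Or.inl (Set.diff_subset_diff_left h))
        · refine Or.inr (Or.inr ?_)
          apply Set.eq_empty_of_subset_empty
          intro j hj
          rw [← h]
          exact ⟨hj.1.1, hj.2.1⟩
      have hcard' : S'.ncard ≤ n := by
        have e1 : S'.ncard ≤ (S \ {T₀}).ncard :=
          Set.ncard_image_le (Set.toFinite _)
        have e2 : (S \ {T₀}).ncard = S.ncard - 1 :=
          Set.ncard_diff_singleton_of_mem hT₀S
        omega
      -- φ maps each generator into the closure for S'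
      have hφgen : ∀ T ∈ S, φ (ind T) ∈ AddSubgroup.closure (ind '' S') := by
        intro T hT
        by_cases hiT : i ∈ T
        · have hsub : T₀ ⊆ T := h1 T hT hiT
          have hval : (ind T) i = 1 := Set.indicator_of_mem hiT _
          have : φ (ind T) = ind (T \ T₀) := by
            rw [ind_diff hsub]
            funext j
            simp [hφ, hval, Pi.smul_apply, smul_eq_mul]
          rw [this]
          by_cases hTT₀ : T = T₀
          · rw [hTT₀]
            simp only [_root_.sdiff_self, Set.bot_eq_empty, ind_empty]
            exact AddSubgroup.zero_mem _
          · exact AddSubgroup.subset_closure ⟨T \ T₀, ⟨T, ⟨hT, hTT₀⟩, rfl⟩, rfl⟩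
        · have hdisj : T ∩ T₀ = ∅ := h2 T hT hiT
          have hval : (ind T) i = 0 := Set.indicator_of_notMem hiT _
          have hTd : T \ T₀ = T := diff_self_of_inter_empty hdisj
          have : φ (ind T) = ind (T \ T₀) := by
            rw [hTd]
            funext j
            simp [hφ, hval, Pi.smul_apply, smul_eq_mul]
          rw [this]
          by_cases hTT₀ : T = T₀
          · exfalso; exact hiT (hTT₀ ▸ hi)
          · exact AddSubgroup.subset_closure ⟨T \ T₀, ⟨T, ⟨hT, hTT₀⟩, rfl⟩, rfl⟩
      -- hence φ maps the closure for S into the closure for S'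
      have hmap : (AddSubgroup.closure (ind '' S)).map φ ≤ AddSubgroup.closure (ind '' S') := by
        rw [AddMonoidHom.map_closure]
        apply (AddSubgroup.closure_le _).mpr
        rintro _ ⟨_, ⟨T, hT, rfl⟩, rfl⟩
        exact hφgen T hT
      -- k • y ∈ closure S', where y = x - x i • ind T₀
      set y : N → ℤ := x - x i • ind T₀ with hy
      have hky : k • y ∈ AddSubgroup.closure (ind '' S') := by
        have : φ (k • x) ∈ AddSubgroup.closure (ind '' S') :=
          hmap (AddSubgroup.mem_map_of_mem φ hx)
        have heq : φ (k • x) = k • y := by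
          funext j
          simp [hφ, hy, mul_sub]
          ring
        rwa [heq] at this
      have hyS' : y ∈ AddSubgroup.closure (ind '' S') := IH S' hcard' hlam' k hk y hky
      -- closure S' ≤ closure S
      have hle : AddSubgroup.closure (ind '' S') ≤ AddSubgroup.closure (ind '' S) := by
        apply (AddSubgroup.closure_le _).mpr
        rintro _ ⟨_, ⟨T, hTmem, rfl⟩, rfl⟩
        have hT1 : T ∈ S := hTmem.1
        change ind (T \ T₀) ∈ _
        by_cases hiT : i ∈ T
        · have hsub : T₀ ⊆ T := h1 T hT1 hiT
          rw [ind_diff hsub]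
          exact sub_mem (AddSubgroup.subset_closure ⟨T, hT1, rfl⟩)
            (AddSubgroup.subset_closure ⟨T₀, hT₀S, rfl⟩)
        · have hdisj : T ∩ T₀ = ∅ := h2 T hT1 hiT
          rw [diff_self_of_inter_empty hdisj]
          exact AddSubgroup.subset_closure ⟨T, hT1, rfl⟩
      have hxy : x = y + x i • ind T₀ := by rw [hy]; ring
      rw [hxy]
      have hT₀mem : ind T₀ ∈ AddSubgroup.closure (ind '' S) :=
        AddSubgroup.subset_closure ⟨T₀, hT₀S, rfl⟩
      exact add_mem (hle hyS') (zsmul_mem hT₀mem _)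
    · -- all members of S are empty, so the closure is trivial
      have hgen : ind '' S ⊆ (⊥ : AddSubgroup (N → ℤ)) := by
        rintro _ ⟨T, hT, rfl⟩
        have hTe : T = ∅ := by
          by_contra hne
          exact hF ⟨T, hT, Set.nonempty_iff_ne_empty.mpr hne⟩
        rw [hTe, ind_empty]
        exact AddSubgroup.zero_mem _
      have : AddSubgroup.closure (ind '' S) ≤ ⊥ := (AddSubgroup.closure_le _).mpr hgen
      have hx0 : k • x = 0 := by
        have := this hx
        simpa using this
      have : x = 0 := by
        rcases smul_eq_zero.mp hx0 with h | h
        · exact absurd h hk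
        · exact h
      rw [this]
      exact AddSubgroup.zero_mem _

/-- A set of integer vectors is unimodular if every subset generates a pure subgroup. -/
def Unimodular {N : Type*} [Fintype N] (R : Set (N → ℤ)) : Prop :=
  ∀ B ⊆ R, ∀ g : (N → ℤ) ⧸ AddSubgroup.closure B, g ≠ 0 → ¬IsOfFinAddOrder g

theorem laminar_indicators_unimodular
    (N : Type*) [Fintype N]
    (𝒯 : Set (Set N))
    (hlam : ∀ A ∈ 𝒯, ∀ B ∈ 𝒯, A ⊆ B ∨ B ⊆ A ∨ A ∩ B = ∅)
    (hsing : ∀ i : N, {i} ∈ 𝒯) :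
    Unimodular {v : N → ℤ | ∃ T ∈ 𝒯,
      v = T.indicator (fun _ => (1 : ℤ)) ∨ v = -T.indicator (fun _ => (1 : ℤ))} := by
  intro B hB
  -- the laminar subfamily whose indicators (up to sign) lie in B
  set S : Set (Set N) := {T | T ∈ 𝒯 ∧ (ind T ∈ B ∨ -ind T ∈ B)} with hS
  have hlamS : ∀ A ∈ S, ∀ C ∈ S, A ⊆ C ∨ C ⊆ A ∨ A ∩ C = ∅ :=
    fun A hA C hC => hlam A hA.1 C hC.1
  have hclos : AddSubgroup.closure B = AddSubgroup.closure (ind '' S) := by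
    apply le_antisymm
    · apply (AddSubgroup.closure_le _).mpr
      intro b hb
      obtain ⟨T, hT, hcase⟩ := hB hb
      rcases hcase with h | h
      · have h' : b = ind T := h
        have hTS : T ∈ S := ⟨hT, Or.inl (h' ▸ hb)⟩
        rw [h']
        exact AddSubgroup.subset_closure ⟨T, hTS, rfl⟩
      · have h' : b = -ind T := h
        have hTS : T ∈ S := ⟨hT, Or.inr (h' ▸ hb)⟩
        rw [h']
        exact neg_mem (AddSubgroup.subset_closure ⟨T, hTS, rfl⟩)
    · apply (AddSubgroup.closure_le _).mpr
      rintro _ ⟨T, ⟨hT𝒯, hTB⟩, rfl⟩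
      rcases hTB with h | h
      · exact AddSubgroup.subset_closure h
      · rw [← neg_neg (ind T)]
        exact neg_mem (AddSubgroup.subset_closure h)
  intro g hg hfin
  obtain ⟨m, hm, hmg⟩ := isOfFinAddOrder_iff_nsmul_eq_zero.mp hfin
  obtain ⟨x, rfl⟩ := QuotientAddGroup.mk_surjective g
  have hmem : (m : ℤ) • x ∈ AddSubgroup.closure B := by
    have : ((m • x : N → ℤ) : (N → ℤ) ⧸ AddSubgroup.closure B) = 0 := by
      rw [← hmg]
      rfl
    have h2 := (QuotientAddGroup.eq_zero_iff _).mp this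
    rwa [natCast_zsmul]
  rw [hclos] at hmem
  have hx : x ∈ AddSubgroup.closure (ind '' S) :=
    laminar_pure S.ncard S le_rfl hlamS (m : ℤ)
      (by exact_mod_cast hm.ne') x hmem
  rw [← hclos] at hx
  exact hg ((QuotientAddGroup.eq_zero_iff _).mpr hx)
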